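/- There exist real 2×2 matrices A and B such that A is positive semidefinite and B is positive semidefinite, but the product A · B is not positive semidefinite. -/

import Mathlib

theorem exists_posSemidef_product_not_posSemidef :
    ∃ A B : Matrix (Fin 2) (Fin 2) ℝ,
      A.PosSemidef ∧ B.PosSemidef ∧ ¬ (A * B).PosSemidef := by
  refine ⟨!![2, 1; 1, 1], !![1, 0; 0, 0], ⟨?_, ?_⟩, ⟨?_, ?_⟩, ?_⟩
  · ext i j; fin_cases i <;> fin_cases j <;>
      simp [Matrix.conjTranspose, Matrix.transpose, Matrix.vecHead, Matrix.vecTail]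
  · intro x
    have := Fin.sum_univ_two (f := fun i => x i * (!![(2:ℝ), 1; 1, 1]).mulVec x i)
    simp [Matrix.mulVec, dotProduct, Fin.sum_univ_two, Finsupp.sum_fintype]
    nlinarith [sq_nonneg (x 0), sq_nonneg (x 0 + x 1)]
  · ext i j; fin_cases i <;> fin_cases j <;>
      simp [Matrix.conjTranspose, Matrix.transpose, Matrix.vecHead, Matrix.vecTail]
  · intro x
    simp [Matrix.mulVec, dotProduct, Fin.sum_univ_two, Finsupp.sum_fintype]
    nlinarith [sq_nonneg (x 0)]
  · intro h
    have h1 := h.1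
    have := congrFun (congrFun h1 0) 1
    simp [Matrix.conjTranspose, Matrix.mul_apply, Fin.sum_univ_two, Matrix.transpose, Matrix.vecHead] at this
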